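/- Let E be a directed graph with finitely many vertices, let u and v be distinct vertices in the same strongly connected component γ₀ such that there is an edge from u to v and u emits at least two edges into γ₀. Let F be the graph obtained from E by removing one fixed edge f from u to v and adding, for each edge e with range u, a new edge ē from s(e) to v. Then for all vertices w, w' there is a path from w to w' in E if and only if there is a path from w to w' in F. -/

import Mathlib

/-- The one-step edge relation of a directed graph with edge set `E`,
source map `s` and range map `r`. -/
def gStep {V E : Type} (s r : E → V) : V → V → Prop :=
  fun x y => ∃ e : E, s e = x ∧ r e = y

/-- Column addition preserves reachability: let `E` be a graph with finitely
many vertices, `u ≠ v` in the same strongly connected component (mutually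
connected by nonempty paths) with an edge `f` from `u` to `v`, and suppose `u`
emits at least two edges into that component.  Form `F` by removing `f` and
adding, for each edge `e` into `u`, a new edge `ē` from `s(e)` to `v`.  Then
for all `w, w'` there is a path from `w` to `w'` in `E` iff there is one
in `F`. -/
theorem stmt_13 (V E : Type) [Fintype V] (s r : E → V)
    (u v : V) (huv : u ≠ v) (f : E) (hsf : s f = u) (hrf : r f = v)
    (hcomp : Relation.TransGen (gStep s r) u v ∧ Relation.TransGen (gStep s r) v u)
    (htwo : ∃ e₁ e₂ : E, e₁ ≠ e₂ ∧ s e₁ = u ∧ s e₂ = u ∧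
      (Relation.TransGen (gStep s r) u (r e₁) ∧ Relation.TransGen (gStep s r) (r e₁) u) ∧
      (Relation.TransGen (gStep s r) u (r e₂) ∧ Relation.TransGen (gStep s r) (r e₂) u))
    (w w' : V) :
    Relation.ReflTransGen (gStep s r) w w' ↔
      Relation.ReflTransGen
        (fun x y =>
          (∃ e : E, e ≠ f ∧ s e = x ∧ r e = y) ∨
          (∃ e : E, r e = u ∧ s e = x ∧ y = v)) w w' := by
  obtain ⟨hu_v, hv_u⟩ := hcomp
  set Fstep : V → V → Prop := (fun x y =>
          (∃ e : E, e ≠ f ∧ s e = x ∧ r e = y) ∨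
          (∃ e : E, r e = u ∧ s e = x ∧ y = v)) with hF
  -- pick an edge g ≠ f with source u and r g connected back to u
  obtain ⟨g, hgf, hgs, hgu⟩ : ∃ g : E, g ≠ f ∧ s g = u ∧
      Relation.TransGen (gStep s r) (r g) u := by
    obtain ⟨e₁, e₂, hne, hs1, hs2, ⟨_, h1u⟩, ⟨_, h2u⟩⟩ := htwo
    rcases eq_or_ne e₁ f with rfl | h
    · exact ⟨e₂, Ne.symm hne, hs2, h2u⟩
    · exact ⟨e₁, h, hs1, h1u⟩
  -- any E-path to u yields an f-free path to u (cut at the first use of f)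
  have lemN : ∀ x, Relation.TransGen (gStep s r) x u →
      Relation.ReflTransGen (fun x y => ∃ e : E, e ≠ f ∧ s e = x ∧ r e = y) x u := by
    intro x hx
    induction hx using Relation.TransGen.head_induction_on with
    | single h =>
        obtain ⟨e, hse, hre⟩ := h
        refine Relation.ReflTransGen.single ⟨e, ?_, hse, hre⟩
        rintro rfl
        exact huv (hre.symm.trans hrf)
    | head h _ ihP =>
        obtain ⟨e, hse, hre⟩ := h
        rcases eq_or_ne e f with rfl | hef
        · have hx : _ = u := hse.symm.trans hsf
          rw [hx]
        · exact Relation.ReflTransGen.head ⟨e, hef, hse, hre⟩ (hre ▸ ihP)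
  -- the removed edge can be simulated in F
  have lemM : Relation.ReflTransGen Fstep u v := by
    have h := lemN (r g) hgu
    rcases h.cases_tail with heq | ⟨b, hb, hstep⟩
    · exact Relation.ReflTransGen.single (Or.inr ⟨g, heq.symm, hgs, rfl⟩)
    · obtain ⟨e', he'f, hse', hre'⟩ := hstep
      have h1 : Relation.ReflTransGen Fstep u (r g) :=
        Relation.ReflTransGen.single (Or.inl ⟨g, hgf, hgs, rfl⟩)
      have h2 : Relation.ReflTransGen Fstep (r g) b :=
        Relation.ReflTransGen.mono (p := Fstep) (fun x y h => Or.inl h) (r g) b hb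
      exact (h1.trans h2).tail (Or.inr ⟨e', hre', hse', rfl⟩)
  constructor
  · intro h
    induction h with
    | refl => exact Relation.ReflTransGen.refl
    | tail _ hstep ih =>
        obtain ⟨e, hse, hre⟩ := hstep
        rcases eq_or_ne e f with rfl | hef
        · have hb : _ = u := hse.symm.trans hsf
          have hc : _ = v := hre.symm.trans hrf
          rw [hb] at ih
          rw [hc]
          exact ih.trans lemM
        · exact ih.tail (Or.inl ⟨e, hef, hse, hre⟩)
  · intro h
    induction h with
    | refl => exact Relation.ReflTransGen.refl
    | tail _ hstep ih =>
        rcases hstep with ⟨e, _, hse, hre⟩ | ⟨e, hreu, hse, hcv⟩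
        · exact ih.tail ⟨e, hse, hre⟩
        · have h1 : Relation.ReflTransGen (gStep s r) _ (r e) := ih.tail ⟨e, hse, rfl⟩
          rw [hreu] at h1
          rw [hcv]
          exact h1.trans hu_v.to_reflTransGen
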